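/- Let I = [I_L, I_R] be a closed interval with 0 < I_L < I_R, let a ∈ (I_L, I_R), and let F : I → ℝ be continuous. Suppose that for all x₁, x₂, x₃ ∈ I with x₁x₂ = x₃·a one has F(x₁) + F(x₂) = F(x₃) + F(a). Then there exists a constant c ∈ ℝ such that F(x) = c·log(x/a) + F(a) for all x ∈ I. -/

import Mathlib

open Set Filter Topology

/-- Linear on the nonnegative part. -/
lemma lin_pos (L R : ℝ) (hL : L ≤ 0) (hR : 0 < R) (G : ℝ → ℝ)
    (hcont : ContinuousOn G (Set.Icc L R))
    (hadd : ∀ s ∈ Set.Icc L R, ∀ t ∈ Set.Icc L R, s + t ∈ Set.Icc L R →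
      G (s + t) = G s + G t) :
    ∀ t ∈ Set.Icc 0 R, G t = (G R / R) * t := by
  have hG0 : G 0 = 0 := by
    have := hadd 0 ⟨hL, hR.le⟩ 0 ⟨hL, hR.le⟩ (by simpa using (⟨hL, hR.le⟩ : (0:ℝ) ∈ Set.Icc L R))
    simp at this
    linarith
  have nmul : ∀ u : ℝ, 0 ≤ u → ∀ n : ℕ, (n : ℝ) * u ≤ R → G ((n : ℝ) * u) = n * G u := by
    intro u hu n
    induction n with
    | zero => intro _; simp [hG0]
    | succ n ih =>
      intro h
      push_cast at h
      have hn0 : (0:ℝ) ≤ (n:ℝ) * u := by positivity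
      have hnu : (n : ℝ) * u ≤ R := by nlinarith
      have huR : u ≤ R := by nlinarith
      have h1 := hadd ((n:ℝ)*u) ⟨hL.trans hn0, hnu⟩ u ⟨hL.trans hu, huR⟩
        (by constructor
            · have : (0:ℝ) ≤ (n:ℝ)*u + u := by positivity
              linarith
            · push_cast at h; nlinarith)
      have h2 := ih hnu
      push_cast
      push_cast at h1 h2 ⊢
      rw [show ((n:ℝ)+1)*u = (n:ℝ)*u + u by ring, h1, h2]
      ring
  intro t ht
  set c := G R / R with hc
  -- sequence
  set s : ℕ → ℝ := fun n => (⌊((n:ℝ) + 1) * t / R⌋₊ : ℝ) * (R / ((n:ℝ) + 1)) with hs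
  have hnc : ∀ n : ℕ, (0:ℝ) < (n:ℝ) + 1 := fun n => by positivity
  have hfloor_le : ∀ n : ℕ, (⌊((n:ℝ) + 1) * t / R⌋₊ : ℝ) ≤ ((n:ℝ) + 1) * t / R := by
    intro n
    exact Nat.floor_le (div_nonneg (mul_nonneg (by positivity) ht.1) hR.le)
  have hs_le : ∀ n : ℕ, s n ≤ t := by
    intro n
    have h1 := hfloor_le n
    have h2 := hnc n
    rw [hs]
    calc (⌊((n:ℝ) + 1) * t / R⌋₊ : ℝ) * (R / ((n:ℝ) + 1))
        ≤ (((n:ℝ) + 1) * t / R) * (R / ((n:ℝ) + 1)) := by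
          apply mul_le_mul_of_nonneg_right h1; positivity
      _ = t := by field_simp
  have hs_nonneg : ∀ n : ℕ, 0 ≤ s n := by
    intro n; rw [hs]; positivity
  have hs_mem : ∀ n : ℕ, s n ∈ Set.Icc L R := fun n =>
    ⟨hL.trans (hs_nonneg n), (hs_le n).trans ht.2⟩
  have hs_lb : ∀ n : ℕ, t - R / ((n:ℝ)+1) ≤ s n := by
    intro n
    have h2 := hnc n
    have hfl : ((n:ℝ) + 1) * t / R - 1 < (⌊((n:ℝ) + 1) * t / R⌋₊ : ℝ) := by
      have := Nat.sub_one_lt_floor (((n:ℝ) + 1) * t / R)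
      linarith
    have : (((n:ℝ) + 1) * t / R - 1) * (R / ((n:ℝ) + 1)) ≤ s n := by
      rw [hs]
      apply mul_le_mul_of_nonneg_right hfl.le
      positivity
    calc t - R / ((n:ℝ)+1) = (((n:ℝ) + 1) * t / R - 1) * (R / ((n:ℝ) + 1)) := by
          field_simp
      _ ≤ s n := this
  have hs_tendsto : Tendsto s atTop (𝓝 t) := by
    have h1 : Tendsto (fun n : ℕ => t - R / ((n:ℝ)+1)) atTop (𝓝 t) := by
      have h0 : Tendsto (fun n : ℕ => R * (1 / ((n:ℝ)+1))) atTop (𝓝 (R * 0)) :=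
        tendsto_one_div_add_atTop_nhds_zero_nat.const_mul R
      have h0' : Tendsto (fun n : ℕ => R / ((n:ℝ)+1)) atTop (𝓝 0) := by
        simpa [div_eq_mul_inv] using h0
      simpa using tendsto_const_nhds.sub h0'
    exact tendsto_of_tendsto_of_tendsto_of_le_of_le h1 tendsto_const_nhds hs_lb hs_le
  have hGs : ∀ n : ℕ, G (s n) = c * s n := by
    intro n
    set m := ⌊((n:ℝ) + 1) * t / R⌋₊ with hm
    set u := R / ((n:ℝ) + 1) with hu
    have hu0 : 0 ≤ u := by rw [hu]; positivity
    have hmu : (m : ℝ) * u ≤ R := (hs_le n).trans ht.2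
    have hGmu : G ((m:ℝ) * u) = m * G u := nmul u hu0 m hmu
    have hn1u : ((n+1 : ℕ) : ℝ) * u = R := by
      push_cast; rw [hu]; field_simp
    have hGR : G R = ((n:ℝ)+1) * G u := by
      have := nmul u hu0 (n+1) (by rw [hn1u])
      rw [hn1u] at this
      push_cast at this
      linarith
    have hGu : G u = G R / ((n:ℝ)+1) := by
      have h2 := hnc n
      field_simp at hGR ⊢
      linarith
    have hsn : s n = (m:ℝ) * u := rfl
    rw [hsn, hGmu, hGu, hc, hu]
    have h2 := hnc n
    have h3 : ((n:ℝ) + 1) ≠ 0 := h2.ne'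
    have h4 : (1:ℝ) + (n:ℝ) ≠ 0 := by rw [add_comm]; exact h3
    field_simp
  -- limits
  have hcw : ContinuousWithinAt G (Set.Icc L R) t := hcont t ⟨hL.trans ht.1, ht.2⟩
  have hlim1 : Tendsto (fun n => G (s n)) atTop (𝓝 (G t)) :=
    hcw.tendsto.comp (tendsto_nhdsWithin_of_tendsto_nhds_of_eventually_within s hs_tendsto
      (Filter.Eventually.of_forall hs_mem))
  have hlim2 : Tendsto (fun n => G (s n)) atTop (𝓝 (c * t)) := by
    simp only [hGs]
    exact tendsto_const_nhds.mul hs_tendsto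
  exact tendsto_nhds_unique hlim1 hlim2

lemma lin_full (L R : ℝ) (hL : L < 0) (hR : 0 < R) (G : ℝ → ℝ)
    (hcont : ContinuousOn G (Set.Icc L R))
    (hadd : ∀ s ∈ Set.Icc L R, ∀ t ∈ Set.Icc L R, s + t ∈ Set.Icc L R →
      G (s + t) = G s + G t) :
    ∃ c : ℝ, ∀ t ∈ Set.Icc L R, G t = c * t := by
  have hpos := lin_pos L R hL.le hR G hcont hadd
  -- reflected function
  set H : ℝ → ℝ := fun t => G (-t) with hH
  have hmap : Set.MapsTo (fun t : ℝ => -t) (Set.Icc (-R) (-L)) (Set.Icc L R) := by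
    intro x hx
    simp only [Set.mem_Icc] at hx ⊢
    constructor <;> [linarith [hx.2]; linarith [hx.1]]
  have hcont' : ContinuousOn H (Set.Icc (-R) (-L)) :=
    hcont.comp (continuous_neg.continuousOn) hmap
  have hadd' : ∀ s ∈ Set.Icc (-R) (-L), ∀ t ∈ Set.Icc (-R) (-L),
      s + t ∈ Set.Icc (-R) (-L) → H (s + t) = H s + H t := by
    intro s hs t ht hst
    have h := hadd (-s) (hmap hs) (-t) (hmap ht)
      (by rw [show -s + -t = -(s+t) by ring]; exact hmap hst)
    show G (-(s+t)) = G (-s) + G (-t)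
    rw [show -(s+t) = -s + -t by ring]
    exact h
  have hneg := lin_pos (-R) (-L) (by linarith) (by linarith) H hcont' hadd'
  -- equality of slopes
  set cR := G R / R with hcR
  set cL := H (-L) / (-L) with hcL
  set σ := min R (-L) with hσ
  have hσ0 : 0 < σ := lt_min hR (by linarith)
  have h1 : G σ = cR * σ := hpos σ ⟨hσ0.le, min_le_left _ _⟩
  have h2 : G (-σ) = cL * σ := by
    have := hneg σ ⟨hσ0.le, min_le_right _ _⟩
    simpa [hH] using this
  have hG0 : G 0 = 0 := by
    have := hadd 0 ⟨hL.le, hR.le⟩ 0 ⟨hL.le, hR.le⟩ (by simpa using (⟨hL.le, hR.le⟩ : (0:ℝ) ∈ Set.Icc L R))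
    simp at this; linarith
  have hsum : G σ + G (-σ) = 0 := by
    have hm1 : σ ∈ Set.Icc L R := ⟨by linarith, min_le_left _ _⟩
    have hm2 : -σ ∈ Set.Icc L R := ⟨by have := min_le_right R (-L); linarith, by linarith⟩
    have := hadd σ hm1 (-σ) hm2 (by simpa using (⟨hL.le, hR.le⟩ : (0:ℝ) ∈ Set.Icc L R))
    simp at this
    linarith [hG0]
  have hslopes : cL = -cR := by
    have hthis : cR * σ + cL * σ = 0 := by rw [← h1, ← h2]; exact hsum
    have h3 : (cR + cL) * σ = 0 := by linear_combination hthis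
    rcases mul_eq_zero.mp h3 with h | h
    · linarith
    · exact absurd h hσ0.ne'
  refine ⟨cR, fun t ht => ?_⟩
  rcases le_or_gt 0 t with h | h
  · exact hpos t ⟨h, ht.2⟩
  · have hmem : -t ∈ Set.Icc 0 (-L) := ⟨by linarith, by linarith [ht.1]⟩
    have := hneg (-t) hmem
    simp only [hH, neg_neg] at this
    rw [this, hslopes]
    ring

theorem cauchy_on_interval (IL IR a : ℝ) (hIL : 0 < IL) (hIR : IL < IR)
    (ha : a ∈ Set.Ioo IL IR) (F : ℝ → ℝ) (hF : ContinuousOn F (Set.Icc IL IR))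
    (hfun : ∀ x₁ ∈ Set.Icc IL IR, ∀ x₂ ∈ Set.Icc IL IR, ∀ x₃ ∈ Set.Icc IL IR,
      x₁ * x₂ = x₃ * a → F x₁ + F x₂ = F x₃ + F a) :
    ∃ c : ℝ, ∀ x ∈ Set.Icc IL IR, F x = c * Real.log (x / a) + F a := by
  obtain ⟨haL, haR⟩ := ha
  have ha0 : 0 < a := hIL.trans haL
  set L := Real.log (IL / a) with hLdef
  set R := Real.log (IR / a) with hRdef
  have hL : L < 0 := Real.log_neg (div_pos hIL ha0) (by rw [div_lt_one ha0]; exact haL)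
  have hR : 0 < R := Real.log_pos (by rw [lt_div_iff₀ ha0]; linarith)
  set G : ℝ → ℝ := fun t => F (a * Real.exp t) - F a with hG
  have hmem : ∀ t ∈ Set.Icc L R, a * Real.exp t ∈ Set.Icc IL IR := by
    intro t ht
    constructor
    · have h1 : IL / a ≤ Real.exp t := by
        rw [← Real.exp_log (div_pos hIL ha0)]
        exact Real.exp_le_exp.mpr ht.1
      rw [div_le_iff₀ ha0] at h1
      linarith [h1]
    · have h2 : Real.exp t ≤ IR / a := by
        rw [← Real.exp_log (div_pos (hIL.trans hIR) ha0)]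
        exact Real.exp_le_exp.mpr ht.2
      rw [le_div_iff₀ ha0] at h2
      linarith [h2]
  have hcont : ContinuousOn G (Set.Icc L R) := by
    apply ContinuousOn.sub _ continuousOn_const
    exact hF.comp ((continuous_const.mul Real.continuous_exp).continuousOn) hmem
  have hadd : ∀ s ∈ Set.Icc L R, ∀ t ∈ Set.Icc L R, s + t ∈ Set.Icc L R →
      G (s + t) = G s + G t := by
    intro s hs t ht hst
    have := hfun (a * Real.exp s) (hmem s hs) (a * Real.exp t) (hmem t ht)
      (a * Real.exp (s + t)) (hmem _ hst)
      (by rw [Real.exp_add]; ring)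
    simp only [hG]
    linarith
  obtain ⟨c, hc⟩ := lin_full L R hL hR G hcont hadd
  refine ⟨c, fun x hx => ?_⟩
  have hx0 : 0 < x := hIL.trans_le hx.1
  have htmem : Real.log (x / a) ∈ Set.Icc L R := by
    constructor
    · rw [hLdef]
      apply Real.log_le_log (div_pos hIL ha0)
      gcongr
      exact hx.1
    · rw [hRdef]
      apply Real.log_le_log (div_pos hx0 ha0)
      gcongr
      exact hx.2
  have hxe : a * Real.exp (Real.log (x / a)) = x := by
    rw [Real.exp_log (div_pos hx0 ha0)]
    field_simp
  have := hc _ htmem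
  simp only [hG, hxe] at this
  linarith
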